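/- Let p be a prime and let R be a ℤ_p-algebra that is p-adically separated and on which multiplication by p is injective. If μ₁ and μ₂ are ℤ_p-linear maps C(ℤ_p, ℤ_p) → R whose moments agree, i.e. μ₁(z ↦ z^k) = μ₂(z ↦ z^k) for every natural number k, then μ₁ = μ₂. In other words, an R-valued measure on ℤ_p is characterized by its moments. -/

import Mathlib

open Finset Filter Polynomial PadicInt
open scoped fwdDiff

variable {p : ℕ} [hp : Fact p.Prime]

noncomputable def Dk (p : ℕ) [Fact p.Prime] (k : ℕ) : C(ℤ_[p], ℤ_[p]) :=
  ⟨fun x => (descPochhammer ℤ_[p] k).eval x, by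
    exact (descPochhammer ℤ_[p] k).continuous⟩

lemma Dk_apply (k : ℕ) (x : ℤ_[p]) :
    Dk p k x = k.factorial • Ring.choose x k := by
  show (descPochhammer ℤ_[p] k).eval x = _
  rw [← descPochhammer_map (algebraMap ℤ ℤ_[p]), eval_map, ← aeval_def, aeval_eq_smeval,
    Ring.descPochhammer_eq_factorial_smul_choose]

lemma Dk_mem_span (k : ℕ) :
    Dk p k ∈ Submodule.span ℤ_[p] (Set.range fun j : ℕ => ContinuousMap.id ℤ_[p] ^ j) := by
  have : Dk p k = ∑ i ∈ range ((descPochhammer ℤ_[p] k).natDegree + 1),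
      (descPochhammer ℤ_[p] k).coeff i • (ContinuousMap.id ℤ_[p] ^ i) := by
    ext x
    simp only [ContinuousMap.coe_sum, Finset.sum_apply, ContinuousMap.smul_apply,
      ContinuousMap.pow_apply, ContinuousMap.id_apply, smul_eq_mul]
    show (descPochhammer ℤ_[p] k).eval x = _
    exact Polynomial.eval_eq_sum_range (p := descPochhammer ℤ_[p] k) x
  rw [this]
  exact Submodule.sum_mem _ fun i _ => Submodule.smul_mem _ _
    (Submodule.subset_span ⟨i, rfl⟩)

lemma approx (f : C(ℤ_[p], ℤ_[p])) (n : ℕ) :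
    ∃ (c : ℤ_[p]) (Q g : C(ℤ_[p], ℤ_[p])), c ≠ 0 ∧
      Q ∈ Submodule.span ℤ_[p] (Set.range fun k : ℕ => ContinuousMap.id ℤ_[p] ^ k) ∧
      c • f = Q + (c * (p : ℤ_[p]) ^ n) • g := by
  classical
  haveI : IsBoundedSMul ℤ_[p] ℚ_[p] := IsBoundedSMul.of_norm_smul_le fun r x => by
    rw [Algebra.smul_def, norm_mul]; rfl
  set F : C(ℤ_[p], ℚ_[p]) := ⟨fun x => (f x : ℚ_[p]), continuous_subtype_val.comp f.continuous⟩
    with hFdef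
  set a : ℕ → ℚ_[p] := fun k => (fwdDiff (1:ℤ_[p]))^[k] (⇑F) 0 with ha
  have ha_norm : ∀ k, ‖a k‖ ≤ 1 := by
    intro k
    refine (IsUltrametricDist.norm_fwdDiff_iter_apply_le 1 F 0 k).trans ?_
    refine (F.norm_le zero_le_one).mpr fun x => ?_
    exact (f x).2
  set b : ℕ → ℤ_[p] := fun k => ⟨a k, ha_norm k⟩ with hb
  have hba : ∀ k, (b k : ℚ_[p]) = a k := fun k => rfl
  -- choose N
  set ε : ℝ := (p : ℝ) ^ (-(n : ℤ)) with hε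
  have hεpos : 0 < ε := zpow_pos (by exact_mod_cast hp.out.pos) _
  obtain ⟨N, hN⟩ : ∃ N : ℕ, ∀ k, N ≤ k → ‖a k‖ ≤ ε := by
    have := (NormedAddCommGroup.tendsto_nhds_zero.mp
      (PadicInt.fwdDiff_tendsto_zero F) ε hεpos)
    obtain ⟨N, hN⟩ := eventually_atTop.mp this
    exact ⟨N, fun k hk => (hN k hk).le⟩
  set c : ℤ_[p] := (N.factorial : ℤ_[p]) with hc
  have hc0 : c ≠ 0 := Nat.cast_ne_zero.mpr N.factorial_ne_zero
  set Q : C(ℤ_[p], ℤ_[p]) :=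
    ∑ k ∈ range N, (((N.factorial / k.factorial : ℕ) : ℤ_[p]) * b k) • Dk p k with hQ
  have hQspan : Q ∈ Submodule.span ℤ_[p]
      (Set.range fun k : ℕ => ContinuousMap.id ℤ_[p] ^ k) :=
    Submodule.sum_mem _ fun k _ => Submodule.smul_mem _ _ (Dk_mem_span k)
  set S : C(ℤ_[p], ℚ_[p]) := ∑ k ∈ range N, mahlerTerm (a k) k with hS
  -- key coercion identity
  have hQcoe : ∀ x : ℤ_[p], ((Q x : ℚ_[p])) = (N.factorial : ℚ_[p]) * S x := by
    intro x
    have : Q x = ∑ k ∈ range N,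
        (((N.factorial / k.factorial : ℕ) : ℤ_[p]) * b k) * (Dk p k x) := by
      simp [hQ, ContinuousMap.coe_sum]
    rw [this, hS]
    rw [show ((↑) : ℤ_[p] → ℚ_[p]) = ⇑(PadicInt.Coe.ringHom) from rfl, map_sum,
      ContinuousMap.coe_sum, Finset.sum_apply, Finset.mul_sum]
    refine Finset.sum_congr rfl fun k hk => ?_
    have hdvd : k.factorial ∣ N.factorial :=
      Nat.factorial_dvd_factorial (Nat.le_of_lt (mem_range.mp hk))
    have : (((N.factorial / k.factorial : ℕ) : ℤ_[p]) * b k) * (Dk p k x)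
        = (N.factorial : ℤ_[p]) * (b k * Ring.choose x k) := by
      rw [Dk_apply, nsmul_eq_mul]
      rw [show (((N.factorial / k.factorial : ℕ) : ℤ_[p]) * b k) * ((k.factorial : ℤ_[p]) * Ring.choose x k)
        = (((N.factorial / k.factorial : ℕ) : ℤ_[p]) * (k.factorial : ℤ_[p])) * (b k * Ring.choose x k) by ring]
      rw [← Nat.cast_mul, Nat.div_mul_cancel hdvd]
    rw [this, map_mul, map_mul]
    rw [mahlerTerm_apply, Algebra.smul_def]
    show (N.factorial : ℚ_[p]) * ((b k : ℚ_[p]) * ((Ring.choose x k : ℤ_[p]) : ℚ_[p])) =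
      (N.factorial : ℚ_[p]) * (((Ring.choose x k : ℤ_[p]) : ℚ_[p]) * a k)
    rw [hba]
    ring
  -- tail bound
  have htail : HasSum (fun k => mahlerTerm (a (k + N)) (k + N)) (F - S) := by
    have := PadicInt.hasSum_mahler F
    exact (hasSum_nat_add_iff' N).mpr this
  have hFS : ‖F - S‖ ≤ ε := by
    rw [← htail.tsum_eq]
    refine IsUltrametricDist.norm_tsum_le_of_forall_le_of_nonneg hεpos.le fun k => ?_
    rw [norm_mahlerTerm]
    exact hN _ le_add_self
  -- the difference
  set w : C(ℤ_[p], ℤ_[p]) := c • f - Q with hw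
  have hwcoe : ∀ x : ℤ_[p], ((w x : ℚ_[p])) = (N.factorial : ℚ_[p]) * ((F - S) x) := by
    intro x
    have h1 : w x = c • f x - Q x := by simp [hw]
    have h2 : ((c • f x : ℤ_[p]) : ℚ_[p]) = (N.factorial : ℚ_[p]) * (F x) := by
      rw [smul_eq_mul]
      push_cast [hc]
      rfl
    rw [ContinuousMap.sub_apply, PadicInt.coe_sub, ContinuousMap.smul_apply, h2, hQcoe x,
      ContinuousMap.sub_apply]
    ring
  set d : ℤ_[p] := c * (p : ℤ_[p]) ^ n with hd
  have hd0 : (d : ℚ_[p]) ≠ 0 := by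
    simp only [hd]
    push_cast
    refine mul_ne_zero ?_ (pow_ne_zero _ ?_)
    · exact_mod_cast Nat.cast_ne_zero.mpr N.factorial_ne_zero
    · exact_mod_cast (Nat.cast_ne_zero.mpr hp.out.ne_zero : (p : ℚ_[p]) ≠ 0)
  have hwle : ∀ x : ℤ_[p], ‖(w x : ℚ_[p])‖ ≤ ‖(d : ℚ_[p])‖ := by
    intro x
    rw [hwcoe x]
    have h1 : ‖(F - S) x‖ ≤ ε := (ContinuousMap.norm_coe_le_norm _ x).trans hFS
    have h2 : ‖(d : ℚ_[p])‖ = ‖(N.factorial : ℚ_[p])‖ * ε := by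
      rw [hd, hc]
      push_cast
      rw [_root_.norm_mul, _root_.norm_pow, Padic.norm_p, hε, zpow_neg, zpow_natCast,
        ← inv_pow]
    rw [_root_.norm_mul, h2]
    exact mul_le_mul_of_nonneg_left h1 (norm_nonneg _)
  set g : C(ℤ_[p], ℤ_[p]) :=
    ⟨fun x => ⟨(w x : ℚ_[p]) / (d : ℚ_[p]), by
        rw [norm_div]
        exact div_le_one_of_le₀ (hwle x) (norm_nonneg _)⟩,
      by
        apply continuous_induced_rng.mpr
        exact ((continuous_subtype_val.comp w.continuous).div_const _)⟩ with hg
  refine ⟨c, Q, g, hc0, hQspan, ?_⟩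
  ext x
  apply Subtype.coe_injective
  show ((c • f) x : ℚ_[p]) = ((Q + d • g) x : ℚ_[p])
  have : ((Q + d • g) x : ℚ_[p]) = (Q x : ℚ_[p]) + (d : ℚ_[p]) * ((w x : ℚ_[p]) / (d : ℚ_[p])) := by
    push_cast
    rfl
  rw [this, mul_div_cancel₀ _ hd0]
  have : ((w x : ℤ_[p]) : ℚ_[p]) = ((c • f) x : ℚ_[p]) - (Q x : ℚ_[p]) := by
    simp [hw]
  rw [this]
  ring


/-- Let `p` be a prime and `R` a `ℤ_p`-algebra that is
`p`-adically separated and on which multiplication by `p` is injective.  If two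
`ℤ_p`-linear maps `μ₁, μ₂ : C(ℤ_p, ℤ_p) → R` have the same moments, i.e.
`μ₁ (z ↦ z^k) = μ₂ (z ↦ z^k)` for all `k : ℕ`, then `μ₁ = μ₂`:
an `R`-valued measure on `ℤ_p` is characterized by its moments. -/
theorem measure_characterized_by_moments
    (p : ℕ) [Fact p.Prime]
    (R : Type*) [CommRing R] [Algebra ℤ_[p] R]
    [IsHausdorff (Ideal.span {(p : R)}) R]
    (hp : Function.Injective fun r : R => (p : R) * r)
    (μ₁ μ₂ : C(ℤ_[p], ℤ_[p]) →ₗ[ℤ_[p]] R)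
    (h : ∀ k : ℕ, μ₁ (ContinuousMap.id ℤ_[p] ^ k) = μ₂ (ContinuousMap.id ℤ_[p] ^ k)) :
    μ₁ = μ₂ := by
  have hcancel : ∀ (m : ℕ) (x y : R), (p : R) ^ m * x = (p : R) ^ m * y → x = y := by
    intro m
    induction m with
    | zero => intro x y hxy; simpa using hxy
    | succ m ih =>
      intro x y hxy
      refine ih x y (hp ?_)
      show (p : R) * ((p : R) ^ m * x) = (p : R) * ((p : R) ^ m * y)
      simpa [← mul_assoc, ← pow_succ'] using hxy
  ext f
  set ν : C(ℤ_[p], ℤ_[p]) →ₗ[ℤ_[p]] R := μ₁ - μ₂ with hν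
  have hνpow : ∀ k : ℕ, ν (ContinuousMap.id ℤ_[p] ^ k) = 0 := fun k => by
    simp [hν, sub_eq_zero.mpr (h k)]
  suffices hν0 : ν f = 0 by
    have : μ₁ f - μ₂ f = 0 := by simpa [hν] using hν0
    exact sub_eq_zero.mp this
  have hmem : ∀ n : ℕ, ν f ∈ (Ideal.span {(p : R)} ^ n • ⊤ : Submodule R R) := by
    intro n
    obtain ⟨c, Q, g, hc0, hQspan, heq⟩ := approx f n
    have hQ0 : ν Q = 0 := by
      have hle : Submodule.span ℤ_[p] (Set.range fun k : ℕ => ContinuousMap.id ℤ_[p] ^ k)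
          ≤ LinearMap.ker ν := Submodule.span_le.mpr (by rintro _ ⟨k, rfl⟩; exact hνpow k)
      exact hle hQspan
    have h1 : c • ν f = (c * (p : ℤ_[p]) ^ n) • ν g := by
      have h2 := congrArg ν heq
      rw [map_smul, map_add, map_smul, hQ0, zero_add] at h2
      exact h2
    rw [Algebra.smul_def, Algebra.smul_def, map_mul] at h1
    obtain ⟨u, m, hcu⟩ : ∃ (u : ℤ_[p]ˣ) (m : ℕ), c = (u : ℤ_[p]) * (p : ℤ_[p]) ^ m :=
      ⟨PadicInt.unitCoeff hc0, _, PadicInt.unitCoeff_spec hc0⟩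
    have hpn : algebraMap ℤ_[p] R ((p : ℤ_[p]) ^ n) = (p : R) ^ n := by
      rw [map_pow, map_natCast]
    have hpm : algebraMap ℤ_[p] R c = algebraMap ℤ_[p] R (u : ℤ_[p]) * (p : R) ^ m := by
      rw [hcu, map_mul, map_pow, map_natCast]
    rw [hpm, hpn, mul_assoc, mul_assoc, mul_assoc] at h1
    have hu : IsUnit (algebraMap ℤ_[p] R (u : ℤ_[p])) := u.isUnit.map (algebraMap ℤ_[p] R)
    have h3 : (p : R) ^ m * ν f = (p : R) ^ m * ((p : R) ^ n * ν g) :=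
      hu.mul_left_cancel h1
    have hfinal : ν f = (p : R) ^ n * ν g := hcancel m _ _ h3
    have hmem1 : ν f ∈ Ideal.span {(p : R)} ^ n := by
      rw [Ideal.span_singleton_pow]
      exact Ideal.mem_span_singleton'.mpr ⟨ν g, by rw [mul_comm, hfinal]⟩
    have := Submodule.smul_mem_smul hmem1 (Submodule.mem_top (x := (1 : R)))
    simpa using this
  exact IsHausdorff.haus (inferInstance : IsHausdorff (Ideal.span {(p : R)}) R) (ν f)
    fun n => SModEq.zero.mpr (hmem n)
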